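/- arXiv:chao-dyn/9612016 — 2 statements merged into one kernel-verified Lean document; each statement's English description precedes it below -/
import Mathlib

section
/- Let γ : ℝ → ℝ² be a C², L-periodic, unit-speed curve that parametrizes, with positive orientation, the boundary of a compact convex body K ⊂ ℝ², and suppose its curvature κ(s) = det(γ'(s), γ''(s)) satisfies κ(s) ≥ 1/ρ_max > 0 for all s. Then for every s, the entire curve is contained in the closed disc of radius ρ_max internally tangent at γ(s): |γ(t) − (γ(s) + ρ_max N(s))| ≤ ρ_max for all t ∈ ℝ, where N(s) = (−Y'(s), X'(s)) is the inward unit normal. -/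
set_option maxHeartbeats 1000000

open Set Filter

private lemma hasDerivAt_fst' {f : ℝ → ℝ × ℝ} {v : ℝ × ℝ} {x : ℝ} (h : HasDerivAt f v x) :
    HasDerivAt (fun y => (f y).1) v.1 x := by
  have h2 := ((ContinuousLinearMap.fst ℝ ℝ ℝ).hasFDerivAt).comp x h.hasFDerivAt
  have h3 := h2.hasDerivAt
  simp at h3
  exact h3

private lemma hasDerivAt_snd' {f : ℝ → ℝ × ℝ} {v : ℝ × ℝ} {x : ℝ} (h : HasDerivAt f v x) :
    HasDerivAt (fun y => (f y).2) v.2 x := by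
  have h2 := ((ContinuousLinearMap.snd ℝ ℝ ℝ).hasFDerivAt).comp x h.hasFDerivAt
  have h3 := h2.hasDerivAt
  simp at h3
  exact h3

private lemma second_deriv_nonneg_of_min {f f' f'' : ℝ → ℝ} {t : ℝ}
    (hf : ∀ u, HasDerivAt f (f' u) u) (hf' : ∀ u, HasDerivAt f' (f'' u) u)
    (hmin : ∀ u, f t ≤ f u) : 0 ≤ f'' t := by
  by_contra hcon
  push_neg at hcon
  have hloc : IsLocalMin f t := Filter.Eventually.of_forall hmin
  have hft' : f' t = 0 := by
    have := hloc.deriv_eq_zero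
    rwa [(hf t).deriv] at this
  have hslope : Tendsto (slope f' t) (nhdsWithin t {t}ᶜ) (nhds (f'' t)) :=
    hasDerivAt_iff_tendsto_slope.mp (hf' t)
  have hev : ∀ᶠ u in nhdsWithin t {t}ᶜ, slope f' t u < f'' t / 2 :=
    hslope (Iio_mem_nhds (by linarith))
  rw [eventually_nhdsWithin_iff, Metric.eventually_nhds_iff] at hev
  obtain ⟨δ, hδ, hevδ⟩ := hev
  have hneg : ∀ x ∈ Set.Ioo t (t + δ/2), deriv f x < 0 := by
    intro x hx
    have hxt : x ≠ t := ne_of_gt hx.1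
    have hd : dist x t < δ := by
      rw [Real.dist_eq, abs_of_pos (by linarith [hx.1] : (0:ℝ) < x - t)]
      linarith [hx.2]
    have := hevδ hd hxt
    rw [slope_def_field, hft', sub_zero] at this
    have hxt' : 0 < x - t := by linarith [hx.1]
    rw [(hf x).deriv]
    have h2 : f' x < f'' t / 2 * (x - t) := (div_lt_iff₀ hxt').mp this
    nlinarith
  have hanti : StrictAntiOn f (Set.Icc t (t + δ/2)) := by
    apply strictAntiOn_of_deriv_neg (convex_Icc _ _)
    · exact fun x _ => (hf x).continuousAt.continuousWithinAt
    · intro x hx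
      rw [interior_Icc] at hx
      exact hneg x hx
  have h1 : f (t + δ/2) < f t := by
    have := hanti (Set.left_mem_Icc.2 (by linarith)) (Set.right_mem_Icc.2 (by linarith)) (by linarith)
    exact this
  exact absurd (hmin (t + δ/2)) (not_le.2 h1)

private lemma periodic_exists_min {f : ℝ → ℝ} {L : ℝ} (hL : 0 < L) (hper : Function.Periodic f L)
    (hf : Continuous f) : ∃ a, ∀ u, f a ≤ f u := by
  obtain ⟨a, _, hmin⟩ := isCompact_Icc.exists_isMinOn (Set.nonempty_Icc.2 (by linarith : (0:ℝ) ≤ L))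
    hf.continuousOn
  refine ⟨a, fun u => ?_⟩
  obtain ⟨y, hy, hval⟩ := hper.exists_mem_Ico₀ hL u
  rw [hval]
  exact hmin (Set.Ico_subset_Icc_self hy)



/-- **Outer Blaschke rolling estimate.**
Let `γ : ℝ → ℝ²` be a `C²`, `L`-periodic, unit-speed curve parametrizing (with
positive orientation, which is forced by the positivity of the signed curvature)
the boundary of a compact convex body `K ⊂ ℝ²`, with signed curvature
`κ(s) = X'(s)Y''(s) − X''(s)Y'(s) ≥ 1/ρmax > 0`.  Then for every `s`, the whole
curve lies in the closed disc of radius `ρmax` internally tangent at `γ(s)`: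
`|γ(t) − (γ(s) + ρmax • N(s))| ≤ ρmax` for all `t`, where `N(s) = (−Y'(s), X'(s))`
is the inward unit normal. -/
theorem outer_blaschke_rolling
    (γ : ℝ → ℝ × ℝ) (L ρmax : ℝ) (K : Set (ℝ × ℝ))
    (hK_compact : IsCompact K) (hK_convex : Convex ℝ K)
    (hK_body : (interior K).Nonempty)
    (hγ_range : Set.range γ = frontier K)
    (hγ_smooth : ContDiff ℝ 2 γ)
    (hL : 0 < L) (hγ_per : Function.Periodic γ L)
    (hγ_unit : ∀ s : ℝ, (deriv γ s).1 ^ 2 + (deriv γ s).2 ^ 2 = 1)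
    (hρmax : 0 < ρmax)
    (hκ_lower : ∀ s : ℝ,
      1 / ρmax ≤ (deriv γ s).1 * (deriv (deriv γ) s).2
          - (deriv (deriv γ) s).1 * (deriv γ s).2) :
    ∀ s t : ℝ,
      ((γ t).1 - ((γ s).1 - ρmax * (deriv γ s).2)) ^ 2 +
        ((γ t).2 - ((γ s).2 + ρmax * (deriv γ s).1)) ^ 2 ≤ ρmax ^ 2 := by
  have h2 : ContDiff ℝ (1 + 1) γ := by exact_mod_cast hγ_smooth
  rw [contDiff_succ_iff_deriv] at h2
  obtain ⟨hγ_diff, -, hD_cd1⟩ := h2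
  rw [contDiff_one_iff_deriv] at hD_cd1
  obtain ⟨hD_diff, hA_cont⟩ := hD_cd1
  have hD_cont : Continuous (deriv γ) := hD_diff.continuous
  have hγd : ∀ u, HasDerivAt γ (deriv γ u) u := fun u => (hγ_diff u).hasDerivAt
  have hDd : ∀ u, HasDerivAt (deriv γ) (deriv (deriv γ) u) u := fun u => (hD_diff u).hasDerivAt
  set k : ℝ → ℝ := fun u => (deriv γ u).1 * (deriv (deriv γ) u).2
      - (deriv (deriv γ) u).1 * (deriv γ u).2 with hk_def
  have hk_cont : Continuous k := by
    apply Continuous.sub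
    · exact (hD_cont.fst).mul (hA_cont.snd)
    · exact (hA_cont.fst).mul (hD_cont.snd)
  have hk_lb : ∀ u, 1 / ρmax ≤ k u := hκ_lower
  have hk_pos : ∀ u, 0 < k u := fun u => lt_of_lt_of_le (by positivity) (hk_lb u)
  have hρk : ∀ u, 1 ≤ ρmax * k u := by
    intro u
    have := hk_lb u
    rw [div_le_iff₀ hρmax] at this
    nlinarith
  -- orthogonality of velocity and acceleration
  have hTA : ∀ u, (deriv γ u).1 * (deriv (deriv γ) u).1
      + (deriv γ u).2 * (deriv (deriv γ) u).2 = 0 := by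
    intro u
    have hu : HasDerivAt (fun v => (deriv γ v).1 ^ 2 + (deriv γ v).2 ^ 2)
        (2 * (deriv γ u).1 * (deriv (deriv γ) u).1 + 2 * (deriv γ u).2 * (deriv (deriv γ) u).2)
        u := by
      have h1 := (hasDerivAt_fst' (hDd u)).pow 2
      have h2 := (hasDerivAt_snd' (hDd u)).pow 2
      exact (h1.add h2).congr_deriv (by ring)
    have hconst : (fun v => (deriv γ v).1 ^ 2 + (deriv γ v).2 ^ 2) = fun _ => (1:ℝ) :=
      funext hγ_unit
    rw [hconst] at hu
    have := hu.unique (hasDerivAt_const u 1)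
    linarith
  have hA1 : ∀ u, (deriv (deriv γ) u).1 = -(k u) * (deriv γ u).2 := by
    intro u
    have h1 := hTA u
    have h2 := hγ_unit u
    show (deriv (deriv γ) u).1 = -((deriv γ u).1 * (deriv (deriv γ) u).2
      - (deriv (deriv γ) u).1 * (deriv γ u).2) * (deriv γ u).2
    linear_combination (deriv γ u).1 * h1 - (deriv (deriv γ) u).1 * h2
  have hA2 : ∀ u, (deriv (deriv γ) u).2 = k u * (deriv γ u).1 := by
    intro u
    have h1 := hTA u
    have h2 := hγ_unit u
    show (deriv (deriv γ) u).2 = ((deriv γ u).1 * (deriv (deriv γ) u).2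
      - (deriv (deriv γ) u).1 * (deriv γ u).2) * (deriv γ u).1
    linear_combination (deriv γ u).2 * h1 - (deriv (deriv γ) u).2 * h2
  have hγK : ∀ u, γ u ∈ K := fun u =>
    hK_compact.isClosed.frontier_subset (hγ_range ▸ Set.mem_range_self u)
  have hγfr : ∀ u, γ u ∈ frontier K := fun u => hγ_range ▸ Set.mem_range_self u
  -- the tangent line at each point of the curve supports K, with inward normal (-y', x')
  have hsupp : ∀ p, ∀ x ∈ K, 0 ≤ (x.1 - (γ p).1) * (-(deriv γ p).2)
      + (x.2 - (γ p).2) * (deriv γ p).1 := by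
    intro p
    have hnotint : γ p ∉ interior K := by
      have h := hγfr p
      rw [← closure_diff_interior] at h
      exact h.2
    obtain ⟨f, hfsep⟩ := geometric_hahn_banach_open_point (hK_convex.interior) isOpen_interior hnotint
    obtain ⟨y0, hy0⟩ := hK_body
    -- f ≤ f (γ p) on K
    have hKle : ∀ x ∈ K, f x ≤ f (γ p) := by
      intro x hx
      have hz : ∀ n : ℕ, ((1:ℝ)/(n+1)) • y0 + (1 - (1:ℝ)/(n+1)) • x ∈ interior K := by
        intro n
        apply hK_convex.combo_interior_self_mem_interior hy0 hx
        · positivity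
        · have : (1:ℝ)/(n+1) ≤ 1 := by
            rw [div_le_one (by positivity)]
            linarith [Nat.cast_nonneg (α := ℝ) n]
          linarith
        · ring
      have htend : Filter.Tendsto (fun n : ℕ => ((1:ℝ)/(n+1)) • y0 + (1 - (1:ℝ)/(n+1)) • x)
          Filter.atTop (nhds x) := by
        have h1 : Filter.Tendsto (fun n : ℕ => (1:ℝ)/(n+1)) Filter.atTop (nhds 0) :=
          tendsto_one_div_add_atTop_nhds_zero_nat
        have h2 := (h1.smul_const y0).add
          (((tendsto_const_nhds (x := (1:ℝ))).sub h1).smul_const x)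
        simpa using h2
      have := (f.continuous.continuousAt.tendsto.comp htend)
      exact le_of_tendsto this (Filter.Eventually.of_forall fun n => (hfsep _ (hz n)).le)
    have hfrep : ∀ v : ℝ × ℝ, f v = v.1 * f (1,0) + v.2 * f (0,1) := by
      intro v
      have hv : v = v.1 • ((1:ℝ),(0:ℝ)) + v.2 • ((0:ℝ),(1:ℝ)) := by
        apply Prod.ext <;> simp
      conv_lhs => rw [hv]
      rw [map_add, map_smul, map_smul, smul_eq_mul, smul_eq_mul]
    set w1 := f (1,0) with hw1def
    set w2 := f (0,1) with hw2def
    -- the function u ↦ f (γ p) - f (γ u) has a global minimum 0 at p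
    have hgmin : ∀ u, (f (γ p) - ((γ p).1 * w1 + (γ p).2 * w2))
        ≤ f (γ p) - ((γ u).1 * w1 + (γ u).2 * w2) := by
      intro u
      have h1 : f (γ u) ≤ f (γ p) := hKle _ (hγK u)
      rw [← hfrep, ← hfrep]
      linarith
    have hgd : ∀ u, HasDerivAt (fun u => f (γ p) - ((γ u).1 * w1 + (γ u).2 * w2))
        (-((deriv γ u).1 * w1 + (deriv γ u).2 * w2)) u := by
      intro u
      have h1 := ((hasDerivAt_fst' (hγd u)).mul_const w1).add
        ((hasDerivAt_snd' (hγd u)).mul_const w2)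
      have h2 := (hasDerivAt_const u (f (γ p))).sub h1
      exact h2.congr_deriv (by ring)
    have hg'd : ∀ u, HasDerivAt (fun u => -((deriv γ u).1 * w1 + (deriv γ u).2 * w2))
        (-((deriv (deriv γ) u).1 * w1 + (deriv (deriv γ) u).2 * w2)) u := by
      intro u
      have h1 := ((hasDerivAt_fst' (hDd u)).mul_const w1).add
        ((hasDerivAt_snd' (hDd u)).mul_const w2)
      exact h1.neg
    have hsec : 0 ≤ -((deriv (deriv γ) p).1 * w1 + (deriv (deriv γ) p).2 * w2) :=
      second_deriv_nonneg_of_min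
        (f'' := fun u => -((deriv (deriv γ) u).1 * w1 + (deriv (deriv γ) u).2 * w2))
        hgd hg'd hgmin
    have hfirst : (deriv γ p).1 * w1 + (deriv γ p).2 * w2 = 0 := by
      have hloc : IsLocalMin (fun u => f (γ p) - ((γ u).1 * w1 + (γ u).2 * w2)) p :=
        Filter.Eventually.of_forall hgmin
      have := hloc.deriv_eq_zero
      rw [(hgd p).deriv] at this
      linarith
    -- decompose w in the (T, N) frame
    set lam := (deriv γ p).1 * w2 - (deriv γ p).2 * w1 with hlam
    have hw1 : w1 = -lam * (deriv γ p).2 := by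
      have h2 := hγ_unit p
      rw [hlam]
      linear_combination (deriv γ p).1 * hfirst - w1 * h2
    have hw2 : w2 = lam * (deriv γ p).1 := by
      have h2 := hγ_unit p
      rw [hlam]
      linear_combination (deriv γ p).2 * hfirst - w2 * h2
    have hlamneg : lam < 0 := by
      rcases lt_trichotomy lam 0 with h | h | h
      · exact h
      · exfalso
        have hw1z : w1 = 0 := by rw [hw1, h]; ring
        have hw2z : w2 = 0 := by rw [hw2, h]; ring
        have := hfsep y0 hy0
        rw [hfrep y0, hfrep (γ p), hw1z, hw2z] at this
        simp at this
      · exfalso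
        have h2 := hγ_unit p
        have hval : -((deriv (deriv γ) p).1 * w1 + (deriv (deriv γ) p).2 * w2)
            = -(lam * k p) := by
          rw [hw1, hw2, hA1 p, hA2 p]
          linear_combination (-(lam * k p)) * h2
        rw [hval] at hsec
        nlinarith [hk_pos p, h]
    intro x hx
    have h0 : 0 ≤ f (γ p) - f x := sub_nonneg.2 (hKle x hx)
    rw [hfrep x, hfrep (γ p), hw1, hw2] at h0
    have h3 : 0 ≤ (-lam) * ((x.1 - (γ p).1) * (-(deriv γ p).2)
        + (x.2 - (γ p).2) * (deriv γ p).1) := by nlinarith [h0]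
    exact (mul_nonneg_iff_of_pos_left (by linarith : (0:ℝ) < -lam)).mp h3
  -- Width bound: every point of the curve is within 2*ρmax of the tangent line, measured
  -- along the inward normal.
  have hwidth : ∀ p u : ℝ, ((γ u).1 - (γ p).1) * (-(deriv γ p).2)
      + ((γ u).2 - (γ p).2) * (deriv γ p).1 ≤ 2 * ρmax := by
    intro p u
    set θ : ℝ → ℝ := fun v => ∫ w in p..v, k w with hθdef
    have hθd : ∀ v, HasDerivAt θ (k v) v := fun v =>
      (hk_cont.integral_hasStrictDerivAt p v).hasDerivAt
    have hθc : Continuous θ := by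
      rw [continuous_iff_continuousAt]; exact fun v => (hθd v).continuousAt
    have hθp : θ p = 0 := by simp only [hθdef]; exact intervalIntegral.integral_same
    have hθmono : Monotone θ := by
      apply (strictMono_of_deriv_pos ?_).monotone
      intro v; rw [(hθd v).deriv]; exact hk_pos v
    have hle : p ≤ p + Real.pi * ρmax := by nlinarith [Real.pi_pos]
    have hππ : Real.pi ≤ θ (p + Real.pi * ρmax) := by
      have hint : (∫ w in p..(p + Real.pi*ρmax), 1/ρmax) ≤ ∫ w in p..(p + Real.pi*ρmax), k w := by
        apply intervalIntegral.integral_mono_on hle intervalIntegrable_const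
          (hk_cont.intervalIntegrable _ _)
        exact fun x _ => hk_lb x
      rw [intervalIntegral.integral_const, smul_eq_mul] at hint
      have he : (p + Real.pi * ρmax - p) * (1/ρmax) = Real.pi := by field_simp; ring
      rw [he] at hint
      exact hint
    obtain ⟨u₁, hu₁mem, hu₁⟩ := intermediate_value_Icc hle hθc.continuousOn
      (Set.mem_Icc.2 ⟨by rw [hθp]; exact Real.pi_pos.le, hππ⟩)
    have hpu₁ : p ≤ u₁ := hu₁mem.1
    -- follow the tangent direction relative to the frame at p
    set C : ℝ → ℝ := fun v => (deriv γ v).1 * (deriv γ p).1 + (deriv γ v).2 * (deriv γ p).2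
      with hCdef
    set Sf : ℝ → ℝ := fun v => (deriv γ v).2 * (deriv γ p).1 - (deriv γ v).1 * (deriv γ p).2
      with hSdef
    have hCd : ∀ v, HasDerivAt C (-(k v) * Sf v) v := by
      intro v
      have h1 := ((hasDerivAt_fst' (hDd v)).mul_const ((deriv γ p).1)).add
        ((hasDerivAt_snd' (hDd v)).mul_const ((deriv γ p).2))
      have h2 : (deriv (deriv γ) v).1 * (deriv γ p).1 + (deriv (deriv γ) v).2 * (deriv γ p).2
          = -(k v) * Sf v := by
        rw [hA1 v, hA2 v]; simp only [hSdef]; ring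
      rw [h2] at h1
      exact h1
    have hSd : ∀ v, HasDerivAt Sf (k v * C v) v := by
      intro v
      have h1 := ((hasDerivAt_snd' (hDd v)).mul_const ((deriv γ p).1)).sub
        ((hasDerivAt_fst' (hDd v)).mul_const ((deriv γ p).2))
      have h2 : (deriv (deriv γ) v).2 * (deriv γ p).1 - (deriv (deriv γ) v).1 * (deriv γ p).2
          = k v * C v := by
        rw [hA1 v, hA2 v]; simp only [hCdef]; ring
      rw [h2] at h1
      exact h1
    have hCS1 : ∀ v, C v ^ 2 + Sf v ^ 2 = 1 := by
      intro v
      simp only [hCdef, hSdef]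
      linear_combination ((deriv γ v).1^2 + (deriv γ v).2^2) * hγ_unit p + hγ_unit v
    have hF : ∀ v, C v * Real.cos (θ v) + Sf v * Real.sin (θ v) = 1 := by
      have hFd : ∀ v, HasDerivAt (fun v => C v * Real.cos (θ v) + Sf v * Real.sin (θ v)) 0 v := by
        intro v
        have hcos : HasDerivAt (fun v => Real.cos (θ v)) (-Real.sin (θ v) * k v) v :=
          (Real.hasDerivAt_cos (θ v)).comp v (hθd v)
        have hsin : HasDerivAt (fun v => Real.sin (θ v)) (Real.cos (θ v) * k v) v :=
          (Real.hasDerivAt_sin (θ v)).comp v (hθd v)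
        have h1 := ((hCd v).mul hcos).add ((hSd v).mul hsin)
        exact h1.congr_deriv (by ring)
      have hconst : ∀ v, C v * Real.cos (θ v) + Sf v * Real.sin (θ v)
          = C p * Real.cos (θ p) + Sf p * Real.sin (θ p) := fun v =>
        is_const_of_deriv_eq_zero (fun x => (hFd x).differentiableAt)
          (fun x => (hFd x).deriv) v p
      intro v
      rw [hconst v, hθp, Real.cos_zero, Real.sin_zero]
      simp only [hCdef, hSdef]
      linear_combination hγ_unit p
    have hCeq : ∀ v, C v = Real.cos (θ v) ∧ Sf v = Real.sin (θ v) := by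
      intro v
      have h1 := hF v
      have h2 := hCS1 v
      have h3 := Real.sin_sq_add_cos_sq (θ v)
      have hsq : (C v - Real.cos (θ v))^2 + (Sf v - Real.sin (θ v))^2 = 0 := by
        linear_combination h2 + h3 - 2*h1
      constructor
      · have e1 : (C v - Real.cos (θ v))^2 = 0 := by
          nlinarith [sq_nonneg (C v - Real.cos (θ v)), sq_nonneg (Sf v - Real.sin (θ v))]
        have := pow_eq_zero_iff (n := 2) (by norm_num) |>.mp e1
        linarith [this]
      · have e1 : (Sf v - Real.sin (θ v))^2 = 0 := by
          nlinarith [sq_nonneg (C v - Real.cos (θ v)), sq_nonneg (Sf v - Real.sin (θ v))]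
        have := pow_eq_zero_iff (n := 2) (by norm_num) |>.mp e1
        linarith [this]
    -- the height function H grows at most like the circle of radius ρmax up to u₁
    have hHd : ∀ v, HasDerivAt (fun v => ((γ v).1 - (γ p).1) * (-(deriv γ p).2)
        + ((γ v).2 - (γ p).2) * (deriv γ p).1) (Sf v) v := by
      intro v
      have h1 := (((hasDerivAt_fst' (hγd v)).sub_const ((γ p).1)).mul_const (-(deriv γ p).2)).add
        (((hasDerivAt_snd' (hγd v)).sub_const ((γ p).2)).mul_const ((deriv γ p).1))
      have h2 : (deriv γ v).1 * (-(deriv γ p).2) + (deriv γ v).2 * (deriv γ p).1 = Sf v := by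
        simp only [hSdef]; ring
      rw [h2] at h1
      exact h1
    have hHu₁ : ((γ u₁).1 - (γ p).1) * (-(deriv γ p).2)
        + ((γ u₁).2 - (γ p).2) * (deriv γ p).1 ≤ 2 * ρmax := by
      have hΦd : ∀ v, HasDerivAt (fun v => ρmax * (1 - Real.cos (θ v))
          - (((γ v).1 - (γ p).1) * (-(deriv γ p).2) + ((γ v).2 - (γ p).2) * (deriv γ p).1))
          (ρmax * (Real.sin (θ v) * k v) - Sf v) v := by
        intro v
        have hcos : HasDerivAt (fun v => Real.cos (θ v)) (-Real.sin (θ v) * k v) v :=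
          (Real.hasDerivAt_cos (θ v)).comp v (hθd v)
        have h1 := (((hasDerivAt_const v (1:ℝ)).sub hcos).const_mul ρmax).sub (hHd v)
        exact h1.congr_deriv (by ring)
      have hmono : MonotoneOn (fun v => ρmax * (1 - Real.cos (θ v))
          - (((γ v).1 - (γ p).1) * (-(deriv γ p).2) + ((γ v).2 - (γ p).2) * (deriv γ p).1))
          (Set.Icc p u₁) := by
        apply monotoneOn_of_deriv_nonneg (convex_Icc _ _)
        · exact fun v _ => (hΦd v).continuousAt.continuousWithinAt
        · exact fun v _ => (hΦd v).differentiableAt.differentiableWithinAt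
        · intro x hx
          rw [interior_Icc] at hx
          rw [(hΦd x).deriv]
          have hθx0 : 0 ≤ θ x := by
            have := hθmono hx.1.le
            rw [hθp] at this; exact this
          have hθxπ : θ x ≤ Real.pi := by
            have := hθmono hx.2.le
            rw [hu₁] at this; exact this
          have hsin : 0 ≤ Real.sin (θ x) := Real.sin_nonneg_of_nonneg_of_le_pi hθx0 hθxπ
          have hSx : Sf x = Real.sin (θ x) := (hCeq x).2
          rw [hSx]
          nlinarith [hρk x, hsin]
      have h0 := hmono (Set.left_mem_Icc.2 hpu₁) (Set.right_mem_Icc.2 hpu₁) hpu₁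
      simp only [hθp, hu₁, Real.cos_zero, Real.cos_pi, sub_self] at h0
      have hHp : ((γ p).1 - (γ p).1) * (-(deriv γ p).2)
          + ((γ p).2 - (γ p).2) * (deriv γ p).1 = 0 := by ring
      nlinarith [h0]
    -- the tangent at u₁ is opposite to the tangent at p
    have hCu₁ : (deriv γ u₁).1 * (deriv γ p).1 + (deriv γ u₁).2 * (deriv γ p).2 = -1 := by
      have := (hCeq u₁).1
      rw [hu₁, Real.cos_pi] at this
      simpa only [hCdef] using this
    have hflip1 : (deriv γ u₁).1 = -(deriv γ p).1 := by
      have h1 := hγ_unit u₁; have h2 := hγ_unit p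
      have hsq : ((deriv γ u₁).1 + (deriv γ p).1)^2 + ((deriv γ u₁).2 + (deriv γ p).2)^2 = 0 := by
        linear_combination h1 + h2 + 2*hCu₁
      have e1 : ((deriv γ u₁).1 + (deriv γ p).1)^2 = 0 := by
        nlinarith [sq_nonneg ((deriv γ u₁).1 + (deriv γ p).1),
          sq_nonneg ((deriv γ u₁).2 + (deriv γ p).2)]
      have := pow_eq_zero_iff (n := 2) (by norm_num) |>.mp e1
      linarith [this]
    have hflip2 : (deriv γ u₁).2 = -(deriv γ p).2 := by
      have h1 := hγ_unit u₁; have h2 := hγ_unit p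
      have hsq : ((deriv γ u₁).1 + (deriv γ p).1)^2 + ((deriv γ u₁).2 + (deriv γ p).2)^2 = 0 := by
        linear_combination h1 + h2 + 2*hCu₁
      have e1 : ((deriv γ u₁).2 + (deriv γ p).2)^2 = 0 := by
        nlinarith [sq_nonneg ((deriv γ u₁).1 + (deriv γ p).1),
          sq_nonneg ((deriv γ u₁).2 + (deriv γ p).2)]
      have := pow_eq_zero_iff (n := 2) (by norm_num) |>.mp e1
      linarith [this]
    -- combine with the support property at u₁
    have hs1 := hsupp u₁ (γ u) (hγK u)
    rw [hflip1, hflip2] at hs1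
    nlinarith [hs1, hHu₁]
  -- the derivative is also periodic
  have hDper : ∀ v, deriv γ (v + L) = deriv γ v := by
    intro v
    have hcomp : HasDerivAt (fun w => γ (w + L)) (deriv γ (v + L)) v := by
      have h1 := hγd (v + L)
      have h2 : HasDerivAt (fun w : ℝ => w + L) 1 v := (hasDerivAt_id v).add_const L
      have h3 := HasDerivAt.scomp v h1 h2
      simp at h3
      exact h3
    have heq : (fun w => γ (w + L)) = γ := funext fun w => hγ_per w
    rw [heq] at hcomp
    exact hcomp.unique (hγd v)
  intro s t
  have hB0 : 0 ≤ ((γ t).1 - (γ s).1) * (-(deriv γ s).2) + ((γ t).2 - (γ s).2) * (deriv γ s).1 :=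
    hsupp s (γ t) (hγK t)
  have hkey : ((γ t).1 - (γ s).1)^2 + ((γ t).2 - (γ s).2)^2
      ≤ 2 * ρmax * (((γ t).1 - (γ s).1) * (-(deriv γ s).2)
        + ((γ t).2 - (γ s).2) * (deriv γ s).1) := by
    have hstep : ∀ ε : ℝ, 0 < ε → ((γ t).1 - (γ s).1)^2 + ((γ t).2 - (γ s).2)^2
        ≤ 2 * ρmax * (((γ t).1 - (γ s).1) * (-(deriv γ s).2)
            + ((γ t).2 - (γ s).2) * (deriv γ s).1)
          + 2 * ε * (((γ t).1 - (γ s).1) * (-(deriv γ s).2)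
            + ((γ t).2 - (γ s).2) * (deriv γ s).1) := by
      intro ε hε
      have hρ' : (0:ℝ) < ρmax + ε := by linarith
      set q : ℝ → ℝ := fun v => ((γ t).1 - (γ v).1) * (-(deriv γ v).2)
        + ((γ t).2 - (γ v).2) * (deriv γ v).1
        - (((γ t).1 - (γ v).1)^2 + ((γ t).2 - (γ v).2)^2) / (2 * (ρmax + ε)) with hqdef
      have hqd : ∀ v, HasDerivAt q
          ((((γ t).1 - (γ v).1) * (deriv γ v).1 + ((γ t).2 - (γ v).2) * (deriv γ v).2)
            * (1 / (ρmax + ε) - k v)) v := by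
        intro v
        have hf1 : HasDerivAt (fun v => (γ t).1 - (γ v).1) (-(deriv γ v).1) v :=
          (hasDerivAt_fst' (hγd v)).const_sub ((γ t).1)
        have hf2 : HasDerivAt (fun v => (γ t).2 - (γ v).2) (-(deriv γ v).2) v :=
          (hasDerivAt_snd' (hγd v)).const_sub ((γ t).2)
        have hg1 : HasDerivAt (fun v => -(deriv γ v).2) (-(deriv (deriv γ) v).2) v :=
          (hasDerivAt_snd' (hDd v)).neg
        have hg2 : HasDerivAt (fun v => (deriv γ v).1) ((deriv (deriv γ) v).1) v :=
          hasDerivAt_fst' (hDd v)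
        have hraw := ((hf1.mul hg1).add (hf2.mul hg2)).sub
          (((hf1.pow 2).add (hf2.pow 2)).div_const (2 * (ρmax + ε)))
        exact hraw.congr_deriv (by
          rw [hA1 v, hA2 v]
          field_simp
          ring)
      have hq_cont : Continuous q := by
        rw [continuous_iff_continuousAt]; exact fun v => (hqd v).continuousAt
      have hq_per : Function.Periodic q L := by
        intro v
        simp only [hqdef]
        rw [hγ_per v, hDper v]
      obtain ⟨u0, hu0⟩ := periodic_exists_min hL hq_per hq_cont
      have hd0 : deriv q u0 = 0 := by
        have hloc : IsLocalMin q u0 := Filter.Eventually.of_forall hu0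
        exact hloc.deriv_eq_zero
      rw [(hqd u0).deriv] at hd0
      have hfac : 1 / (ρmax + ε) - k u0 < 0 := by
        have h1 : 1 / (ρmax + ε) < 1 / ρmax := by
          apply one_div_lt_one_div_of_lt hρmax; linarith
        linarith [hk_lb u0]
      have hp0 : ((γ t).1 - (γ u0).1) * (deriv γ u0).1
          + ((γ t).2 - (γ u0).2) * (deriv γ u0).2 = 0 := by
        rcases mul_eq_zero.mp hd0 with h | h
        · exact h
        · exact absurd h (ne_of_lt hfac)
      have hμ0 : 0 ≤ ((γ t).1 - (γ u0).1) * (-(deriv γ u0).2)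
          + ((γ t).2 - (γ u0).2) * (deriv γ u0).1 := hsupp u0 (γ t) (hγK t)
      have hμ2 : ((γ t).1 - (γ u0).1) * (-(deriv γ u0).2)
          + ((γ t).2 - (γ u0).2) * (deriv γ u0).1 ≤ 2 * ρmax := hwidth u0 t
      have hnorm : ((γ t).1 - (γ u0).1)^2 + ((γ t).2 - (γ u0).2)^2
          = (((γ t).1 - (γ u0).1) * (-(deriv γ u0).2)
            + ((γ t).2 - (γ u0).2) * (deriv γ u0).1)^2 := by
        linear_combination (-(((γ t).1 - (γ u0).1)^2 + ((γ t).2 - (γ u0).2)^2)) * hγ_unit u0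
          + (((γ t).1 - (γ u0).1) * (deriv γ u0).1
            + ((γ t).2 - (γ u0).2) * (deriv γ u0).2) * hp0
      have hq0 : 0 ≤ q u0 := by
        simp only [hqdef]
        rw [sub_nonneg, hnorm, div_le_iff₀ (by positivity)]
        have h5 : ((γ t).1 - (γ u0).1) * (-(deriv γ u0).2)
            + ((γ t).2 - (γ u0).2) * (deriv γ u0).1 ≤ 2 * (ρmax + ε) := by linarith
        nlinarith [mul_nonneg hμ0 (sub_nonneg.2 h5)]
      have hqs0 : 0 ≤ q s := le_trans hq0 (hu0 s)
      simp only [hqdef] at hqs0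
      rw [sub_nonneg, div_le_iff₀ (by positivity)] at hqs0
      nlinarith [hqs0]
    by_contra hcon
    push_neg at hcon
    set B := ((γ t).1 - (γ s).1) * (-(deriv γ s).2) + ((γ t).2 - (γ s).2) * (deriv γ s).1
      with hBdef
    set G := ((γ t).1 - (γ s).1)^2 + ((γ t).2 - (γ s).2)^2 - 2*ρmax*B with hGdef
    have hG : 0 < G := by rw [hGdef]; linarith [hcon]
    have hden : (0:ℝ) < 2*B+2 := by linarith [hB0]
    set ε := G / (2*B+2) with hεdef
    have hε : 0 < ε := div_pos hG hden
    have hεq : ε * (2*B+2) = G := by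
      rw [hεdef]; field_simp
    have hst := hstep ε hε
    linarith [hst, hεq, hε]
  nlinarith [hkey, hγ_unit s, sq_nonneg ρmax]
end

section
/- Let γ : ℝ → ℝ² be a C², L-periodic, unit-speed curve that parametrizes, with positive orientation, the boundary of a compact convex body K ⊂ ℝ², and suppose its curvature κ(s) = det(γ'(s), γ''(s)) satisfies 0 < κ(s) ≤ 1/ρ_min for all s. Then for every s, the curve does not enter the open disc of radius ρ_min internally tangent at γ(s): |γ(t) − (γ(s) + ρ_min N(s))| ≥ ρ_min for all t ∈ ℝ, where N(s) = (−Y'(s), X'(s)) is the inward unit normal. -/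
open Real Set intervalIntegral


set_option maxHeartbeats 2000000 in
/-- **Inner Blaschke rolling estimate.**
Let `γ : ℝ → ℝ²` be a `C²`, `L`-periodic, unit-speed curve parametrizing (with
positive orientation, which is forced by the positivity of the signed curvature)
the boundary of a compact convex body `K ⊂ ℝ²`, with signed curvature
`κ(s) = X'(s)Y''(s) − X''(s)Y'(s)` satisfying `0 < κ(s) ≤ 1/ρmin`.  Then for
every `s`, the curve does not enter the open disc of radius `ρmin` internally
tangent at `γ(s)`: `|γ(t) − (γ(s) + ρmin • N(s))| ≥ ρmin` for all `t`, where
`N(s) = (−Y'(s), X'(s))` is the inward unit normal. -/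
theorem inner_blaschke_rolling
    (γ : ℝ → ℝ × ℝ) (L ρmin : ℝ) (K : Set (ℝ × ℝ))
    (hK_compact : IsCompact K) (hK_convex : Convex ℝ K)
    (hK_body : (interior K).Nonempty)
    (hγ_range : Set.range γ = frontier K)
    (hγ_smooth : ContDiff ℝ 2 γ)
    (hL : 0 < L) (hγ_per : Function.Periodic γ L)
    (hγ_unit : ∀ s : ℝ, (deriv γ s).1 ^ 2 + (deriv γ s).2 ^ 2 = 1)
    (hρmin : 0 < ρmin)
    (hκ_pos : ∀ s : ℝ,
      0 < (deriv γ s).1 * (deriv (deriv γ) s).2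
          - (deriv (deriv γ) s).1 * (deriv γ s).2)
    (hκ_upper : ∀ s : ℝ,
      (deriv γ s).1 * (deriv (deriv γ) s).2
          - (deriv (deriv γ) s).1 * (deriv γ s).2 ≤ 1 / ρmin) :
    ∀ s t : ℝ,
      ρmin ^ 2 ≤ ((γ t).1 - ((γ s).1 - ρmin * (deriv γ s).2)) ^ 2 +
        ((γ t).2 - ((γ s).2 + ρmin * (deriv γ s).1)) ^ 2 := by
  have hdiff : Differentiable ℝ γ := hγ_smooth.differentiable (by norm_num)
  have hC1 : ContDiff ℝ 1 (deriv γ) := by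
    have h2 : ContDiff ℝ ((1:ℕ) + 1) γ := by
      convert hγ_smooth using 2 <;> norm_num
    exact (contDiff_succ_iff_deriv.mp h2).2.2
  have hdiff' : Differentiable ℝ (deriv γ) := hC1.differentiable (by norm_num)
  have hcont'' : Continuous (deriv (deriv γ)) := hC1.continuous_deriv le_rfl
  set d : ℝ → ℝ × ℝ := deriv γ with hd
  set dd : ℝ → ℝ × ℝ := deriv (deriv γ) with hdd
  set κ : ℝ → ℝ := fun u => (d u).1 * (dd u).2 - (dd u).1 * (d u).2 with hκdef
  have hκ_cont : Continuous κ := by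
    apply Continuous.sub
    · exact ((continuous_fst.comp hdiff'.continuous)).mul (continuous_snd.comp hcont'')
    · exact ((continuous_fst.comp hcont'')).mul (continuous_snd.comp hdiff'.continuous)
  have hD1 : ∀ u : ℝ, HasDerivAt (fun v => (γ v).1) ((d u).1) u :=
    fun u => ((hdiff u).hasDerivAt).fst
  have hD2 : ∀ u : ℝ, HasDerivAt (fun v => (γ v).2) ((d u).2) u :=
    fun u => ((hdiff u).hasDerivAt).snd
  have hDD1 : ∀ u : ℝ, HasDerivAt (fun v => (d v).1) ((dd u).1) u :=
    fun u => ((hdiff' u).hasDerivAt).fst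
  have hDD2 : ∀ u : ℝ, HasDerivAt (fun v => (d v).2) ((dd u).2) u :=
    fun u => ((hdiff' u).hasDerivAt).snd
  have horth : ∀ u : ℝ, (d u).1 * (dd u).1 + (d u).2 * (dd u).2 = 0 := by
    intro u
    have h1 : HasDerivAt (fun v => (d v).1 ^ 2 + (d v).2 ^ 2)
        (2 * (d u).1 ^ 1 * (dd u).1 + 2 * (d u).2 ^ 1 * (dd u).2) u :=
      (((hDD1 u).pow 2).add ((hDD2 u).pow 2))
    have h2 : (fun v => (d v).1 ^ 2 + (d v).2 ^ 2) = fun _ => (1:ℝ) := funext hγ_unit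
    rw [h2] at h1
    have h3 := h1.unique (hasDerivAt_const u 1)
    nlinarith [h3]
  have hsecond : ∀ u : ℝ, (dd u).1 = -(κ u) * (d u).2 ∧ (dd u).2 = κ u * (d u).1 := by
    intro u
    have h1 := horth u
    have h2 := hγ_unit u
    simp only [hκdef]
    constructor
    · linear_combination (d u).1 * h1 - (dd u).1 * h2
    · linear_combination (d u).2 * h1 - (dd u).2 * h2
  -- base point
  intro s
  -- angle function
  set z : ℂ := ⟨(d s).1, (d s).2⟩ with hzdef
  have hzabs : ‖z‖ = 1 := by
    have h1 : ‖z‖ ^ 2 = 1 := by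
      rw [Complex.sq_norm, Complex.normSq_mk]
      nlinarith [hγ_unit s]
    nlinarith [norm_nonneg z, h1]
  have hzne : z ≠ 0 := by
    intro h; rw [h] at hzabs; simp at hzabs
  set A : ℝ := Complex.arg z with hAdef
  have hA1 : Real.cos A = (d s).1 := by
    rw [hAdef, Complex.cos_arg hzne, hzabs]; simp [hzdef]
  have hA2 : Real.sin A = (d s).2 := by
    rw [hAdef, Complex.sin_arg, hzabs]; simp [hzdef]
  set θ : ℝ → ℝ := fun u => A + ∫ v in s..u, κ v with hθdef
  have hθD : ∀ u : ℝ, HasDerivAt θ (κ u) u := by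
    intro u
    have h1 : HasDerivAt (fun w => ∫ v in s..w, κ v) (κ u) u :=
      intervalIntegral.integral_hasDerivAt_right (hκ_cont.intervalIntegrable _ _)
        hκ_cont.aestronglyMeasurable.stronglyMeasurableAtFilter hκ_cont.continuousAt
    simpa [hθdef] using h1.const_add A
  have hθs : θ s = A := by simp [hθdef]
  have hθcont : Continuous θ := by
    rw [continuous_iff_continuousAt]; exact fun u => (hθD u).continuousAt
  have hθmono : StrictMono θ := by
    apply strictMono_of_deriv_pos
    intro u; rw [(hθD u).deriv]
    simpa [hκdef] using hκ_pos u
  -- tangent formula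
  have htan : ∀ u : ℝ, (d u).1 = Real.cos (θ u) ∧ (d u).2 = Real.sin (θ u) := by
    have hG : ∀ u : ℝ, HasDerivAt
        (fun v => ((d v).1 - Real.cos (θ v)) ^ 2 + ((d v).2 - Real.sin (θ v)) ^ 2) 0 u := by
      intro u
      have hc : HasDerivAt (fun v => Real.cos (θ v)) (-Real.sin (θ u) * κ u) u := (hθD u).cos
      have hs' : HasDerivAt (fun v => Real.sin (θ v)) (Real.cos (θ u) * κ u) u := (hθD u).sin
      have h1 : HasDerivAt (fun v => (d v).1 - Real.cos (θ v))
          ((dd u).1 - (-Real.sin (θ u) * κ u)) u := (hDD1 u).sub hc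
      have h2 : HasDerivAt (fun v => (d v).2 - Real.sin (θ v))
          ((dd u).2 - Real.cos (θ u) * κ u) u := (hDD2 u).sub hs'
      have h3 := (h1.pow 2).add (h2.pow 2)
      refine h3.congr_deriv ?_
      obtain ⟨e1, e2⟩ := hsecond u
      rw [e1, e2]; simp only [show (2:ℕ) - 1 = 1 from rfl, pow_one, Nat.cast_ofNat]; ring
    have hGdiff : Differentiable ℝ
        (fun v => ((d v).1 - Real.cos (θ v)) ^ 2 + ((d v).2 - Real.sin (θ v)) ^ 2) :=
      fun u => (hG u).differentiableAt
    have hGconst : ∀ u : ℝ,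
        ((d u).1 - Real.cos (θ u)) ^ 2 + ((d u).2 - Real.sin (θ u)) ^ 2
        = ((d s).1 - Real.cos (θ s)) ^ 2 + ((d s).2 - Real.sin (θ s)) ^ 2 :=
      fun u => is_const_of_deriv_eq_zero hGdiff (fun v => (hG v).deriv) u s
    intro u
    have h0 := hGconst u
    rw [hθs, hA1, hA2] at h0
    simp only [sub_self] at h0
    constructor <;> nlinarith [h0, sq_nonneg ((d u).1 - Real.cos (θ u)), sq_nonneg ((d u).2 - Real.sin (θ u))]
  -- basic K facts
  have hKclosed : IsClosed K := hK_compact.isClosed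
  have hγK : ∀ u : ℝ, γ u ∈ K := by
    intro u
    have h1 : γ u ∈ frontier K := by rw [← hγ_range]; exact Set.mem_range_self u
    exact hKclosed.frontier_subset h1
  have hγfr : ∀ u : ℝ, γ u ∈ frontier K := by
    intro u; rw [← hγ_range]; exact Set.mem_range_self u
  have hγnotint : ∀ u : ℝ, γ u ∉ interior K := by
    intro u
    have h1 := hγfr u
    rw [hKclosed.frontier_eq] at h1
    exact h1.2
  -- the supporting half-plane property
  have hsup : ∀ a : ℝ, ∀ x ∈ K,
      0 ≤ (x.1 - (γ a).1) * (-(d a).2) + (x.2 - (γ a).2) * ((d a).1) := by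
    intro a
    obtain ⟨f, hf⟩ := geometric_hahn_banach_open_point hK_convex.interior isOpen_interior
      (hγnotint a)
    obtain ⟨x₀, hx₀⟩ := hK_body
    have hfK : ∀ x ∈ K, f x ≤ f (γ a) := by
      intro x hx
      by_contra hlt
      push_neg at hlt
      have hx₀lt : f x₀ < f (γ a) := hf x₀ hx₀
      set tt : ℝ := (f x - f (γ a)) / (f x - f x₀) with httdef
      have hnum : 0 < f x - f (γ a) := by linarith
      have hden : 0 < f x - f x₀ := by linarith
      have htt0 : 0 < tt := div_pos hnum hden
      have htt1 : tt ≤ 1 := by rw [httdef, div_le_one hden]; linarith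
      have hmem : (1 - tt) • x + tt • x₀ ∈ interior K :=
        hK_convex.combo_closure_interior_mem_interior (subset_closure hx) hx₀
          (by linarith) htt0 (by ring)
      have h2 := hf _ hmem
      rw [map_add, map_smul, map_smul] at h2
      simp only [smul_eq_mul] at h2
      have heq : tt * (f x - f x₀) = f x - f (γ a) := by
        rw [httdef]; exact div_mul_cancel₀ _ hden.ne'
      nlinarith [h2, heq]
    set v₁ : ℝ := f (1, 0) with hv₁def
    set v₂ : ℝ := f (0, 1) with hv₂def
    have hfeq : ∀ p : ℝ × ℝ, f p = p.1 * v₁ + p.2 * v₂ := by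
      intro p
      have hp : p = p.1 • ((1:ℝ), (0:ℝ)) + p.2 • ((0:ℝ), (1:ℝ)) := by
        ext <;> simp
      conv_lhs => rw [hp]
      rw [map_add, map_smul, map_smul]
      simp [smul_eq_mul, hv₁def, hv₂def]
    have hF : ∀ u : ℝ, HasDerivAt (fun w => f (γ w)) ((d u).1 * v₁ + (d u).2 * v₂) u := by
      intro u
      have h1 : (fun w => f (γ w)) = fun w => (γ w).1 * v₁ + (γ w).2 * v₂ :=
        funext fun w => hfeq (γ w)
      rw [h1]
      exact ((hD1 u).mul_const v₁).add ((hD2 u).mul_const v₂)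
    have hmax0 : ((d a).1 * v₁ + (d a).2 * v₂) = 0 := by
      have hloc : IsLocalMax (fun w => f (γ w)) a :=
        Filter.Eventually.of_forall fun u => hfK (γ u) (hγK u)
      exact hloc.hasDerivAt_eq_zero (hF a)
    set c' : ℝ := v₂ * (d a).1 - v₁ * (d a).2 with hc'def
    have hv1 : v₁ = -c' * (d a).2 := by
      rw [hc'def]; linear_combination (d a).1 * hmax0 - v₁ * hγ_unit a
    have hv2 : v₂ = c' * (d a).1 := by
      rw [hc'def]; linear_combination (d a).2 * hmax0 - v₂ * hγ_unit a
    have hc'ne : c' ≠ 0 := by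
      intro h0
      have hv10 : v₁ = 0 := by rw [hv1, h0]; ring
      have hv20 : v₂ = 0 := by rw [hv2, h0]; ring
      have h3 := hf x₀ hx₀
      rw [hfeq x₀, hfeq (γ a), hv10, hv20] at h3
      simp at h3
    have hc'neg : c' < 0 := by
      rcases lt_or_gt_of_ne hc'ne with h | hpos
      · exact h
      exfalso
      obtain ⟨t', ht'a, ht'le⟩ : ∃ t', a < t' ∧ θ t' ≤ θ a + π := by
        by_cases hcase : θ (a+1) ≤ θ a + π
        · exact ⟨a+1, lt_add_one a, hcase⟩
        · push_neg at hcase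
          have hIVT := intermediate_value_Ioo (le_of_lt (lt_add_one a)) hθcont.continuousOn
          have hmem : θ a + π ∈ Set.Ioo (θ a) (θ (a+1)) := ⟨by linarith [Real.pi_pos], hcase⟩
          obtain ⟨t', ht'mem, ht'eq⟩ := hIVT hmem
          exact ⟨t', ht'mem.1, le_of_eq ht'eq⟩
      have hmono : StrictMonoOn (fun w => f (γ w)) (Set.Icc a t') := by
        apply strictMonoOn_of_deriv_pos (convex_Icc a t')
        · exact (f.continuous.comp hdiff.continuous).continuousOn
        · intro u hu
          rw [interior_Icc] at hu
          rw [(hF u).deriv]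
          have h1 : (d u).1 * v₁ + (d u).2 * v₂ = c' * Real.sin (θ u - θ a) := by
            rw [hv1, hv2, (htan u).1, (htan u).2, (htan a).1, (htan a).2, Real.sin_sub]; ring
          rw [h1]
          apply mul_pos hpos
          apply Real.sin_pos_of_pos_of_lt_pi
          · have := hθmono hu.1; linarith
          · have := hθmono hu.2; linarith
      have h4 : f (γ a) < f (γ t') :=
        hmono (Set.mem_Icc.mpr ⟨le_refl a, le_of_lt ht'a⟩)
          (Set.mem_Icc.mpr ⟨le_of_lt ht'a, le_refl t'⟩) ht'a
      exact absurd (hfK (γ t') (hγK t')) (not_le.mpr h4)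
    intro x hx
    have h1 := hfK x hx
    rw [hfeq x, hfeq (γ a), hv1, hv2] at h1
    by_contra hneg
    push_neg at hneg
    nlinarith [h1, mul_pos_of_neg_of_neg hc'neg hneg]
  -- periodicity of derivatives and curvature
  have hd_per : ∀ u : ℝ, d (u + L) = d u := by
    intro u
    have h1 : (fun w => γ (w + L)) = γ := funext fun w => hγ_per w
    have h2 := deriv_comp_add_const γ L u
    rw [h1] at h2
    exact h2.symm
  have hdd_per : ∀ u : ℝ, dd (u + L) = dd u := by
    intro u
    have h1 : (fun w => d (w + L)) = d := funext hd_per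
    have h2 := deriv_comp_add_const d L u
    rw [h1] at h2
    exact h2.symm
  have hκ_per : ∀ u : ℝ, κ (u + L) = κ u := by
    intro u; simp only [hκdef, hd_per, hdd_per]
  set C : ℝ := ∫ v in s..s+L, κ v with hCdef
  have hCpos : 0 < C := by
    rw [hCdef]
    apply intervalIntegral.intervalIntegral_pos_of_pos (hκ_cont.intervalIntegrable s (s+L))
    · intro x
      simp only [hκdef]
      exact hκ_pos x
    · linarith
  have hC : ∀ u : ℝ, θ (u + L) = θ u + C := by
    intro u
    have h1 : (∫ v in u..u+L, κ v) = C := by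
      rw [hCdef]; exact Function.Periodic.intervalIntegral_add_eq hκ_per u s
    have h3 := intervalIntegral.integral_add_adjacent_intervals (μ := MeasureTheory.volume)
      (hκ_cont.intervalIntegrable s u) (hκ_cont.intervalIntegrable u (u+L))
    simp only [hθdef]
    linarith [h1, h3]
  have hCn : ∀ n : ℕ, θ (s + n*L) = A + n*C := by
    intro n
    induction n with
    | zero => simpa using hθs
    | succ n ih =>
      have h1 := hC (s + n*L)
      rw [show s + ((n:ℕ)+1:ℕ)*L = (s + (n:ℝ)*L) + L by push_cast; ring, h1, ih]
      push_cast; ring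
  have hCn' : ∀ n : ℕ, θ (s - n*L) = A - n*C := by
    intro n
    induction n with
    | zero => simpa using hθs
    | succ n ih =>
      have h1 := hC (s - (((n:ℕ)+1:ℕ):ℝ)*L)
      rw [show s - (((n:ℕ)+1:ℕ):ℝ)*L + L = s - n*L by push_cast; ring, ih] at h1
      rw [show θ (s - (((n:ℕ)+1:ℕ):ℝ)*L) = A - (n:ℝ)*C - C by linarith [h1]]
      push_cast; ring
  have hreach : ∀ y : ℝ, ∃ u, θ u = y := by
    intro y
    obtain ⟨n, hn⟩ := exists_nat_ge (|y - A| / C + 1)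
    have h0 : |y - A| / C ≤ n := by linarith
    have h1 : |y - A| ≤ n*C := by
      have := (div_le_iff₀ hCpos).mp h0
      linarith
    have h2 := abs_le.mp h1
    have h3 : s - n*L ≤ s + n*L := by
      have : (0:ℝ) ≤ n*L := by positivity
      linarith
    have h4 : y ∈ Set.Icc (θ (s - n*L)) (θ (s + n*L)) := by
      rw [hCn, hCn']
      constructor <;> linarith [h2.1, h2.2]
    obtain ⟨u, _, hu⟩ := intermediate_value_Icc h3 hθcont.continuousOn h4
    exact ⟨u, hu⟩
  -- direction repeats after 2π
  have hdir : ∀ (u : ℝ) (m : ℤ), θ u = θ s + 2*π*m → d u = d s := by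
    intro u m hm
    have h1 : (d u).1 = (d s).1 := by
      rw [(htan u).1, (htan s).1, hm,
        show θ s + 2*π*(m:ℝ) = θ s + (m:ℝ)*(2*π) by ring, Real.cos_add_int_mul_two_pi]
    have h2 : (d u).2 = (d s).2 := by
      rw [(htan u).2, (htan s).2, hm,
        show θ s + 2*π*(m:ℝ) = θ s + (m:ℝ)*(2*π) by ring, Real.sin_add_int_mul_two_pi]
    exact Prod.ext h1 h2
  -- the height function over the tangent line at s
  set W : ℝ → ℝ := fun w => ((γ w).1 - (γ s).1) * (-(d s).2) + ((γ w).2 - (γ s).2) * ((d s).1)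
    with hWdef
  have hW_nonneg : ∀ w, 0 ≤ W w := fun w => hsup s (γ w) (hγK w)
  have hWD : ∀ w, HasDerivAt W ((d w).1 * (-(d s).2) + (d w).2 * ((d s).1)) w := by
    intro w
    exact (((hD1 w).sub_const _).mul_const _).add (((hD2 w).sub_const _).mul_const _)
  set N : ℝ × ℝ := (-(d s).2, (d s).1) with hNdef
  have hsq : ((d s).1)^2 ≤ 1 ∧ ((d s).2)^2 ≤ 1 := by
    constructor <;> nlinarith [hγ_unit s, sq_nonneg ((d s).1), sq_nonneg ((d s).2)]
  have hNnorm : ‖N‖ ≤ 1 := by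
    rw [Prod.norm_def]
    apply max_le
    · rw [hNdef]; simp only [Real.norm_eq_abs]
      rw [abs_neg]
      exact abs_le_one_iff_mul_self_le_one.mpr (by nlinarith [hsq.2])
    · rw [hNdef]; simp only [Real.norm_eq_abs]
      exact abs_le_one_iff_mul_self_le_one.mpr (by nlinarith [hsq.1])
  have hKpts : ∀ x ∈ interior K, ∃ ε : ℝ, 0 < ε ∧ x + ε • N ∈ K ∧ x - ε • N ∈ K := by
    intro x hx
    obtain ⟨ε, hε, hball⟩ := Metric.isOpen_iff.mp isOpen_interior x hx
    have hsmall : ‖(ε/2) • N‖ < ε := by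
      rw [norm_smul, Real.norm_eq_abs, abs_of_pos (by linarith : (0:ℝ) < ε/2)]
      nlinarith [hNnorm, norm_nonneg N]
    refine ⟨ε/2, by linarith, ?_, ?_⟩
    · refine interior_subset (hball ?_)
      rw [Metric.mem_ball, dist_eq_norm, add_sub_cancel_left]
      exact hsmall
    · refine interior_subset (hball ?_)
      rw [Metric.mem_ball, dist_eq_norm]
      rw [show x - (ε/2) • N - x = -((ε/2) • N) by abel, norm_neg]
      exact hsmall
  -- characterization of zeros of W
  have hWzero_char : ∀ w, W w = 0 → ∃ m : ℤ, θ w = θ s + 2*π*m := by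
    intro w hw
    have hmin : IsLocalMin W w :=
      Filter.Eventually.of_forall fun v => hw ▸ hW_nonneg v
    have hder0 := hmin.hasDerivAt_eq_zero (hWD w)
    have hsin : Real.sin (θ w - θ s) = 0 := by
      rw [Real.sin_sub, ← (htan w).1, ← (htan w).2, ← (htan s).1, ← (htan s).2]
      linarith [hder0]
    obtain ⟨n, hn⟩ := Real.sin_eq_zero_iff.mp hsin
    rcases Int.even_or_odd n with ⟨m, hm⟩ | ⟨m, hm⟩
    · refine ⟨m, ?_⟩
      rw [hm] at hn; push_cast at hn; linarith
    · exfalso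
      have hθw : θ w = (θ s + π) + (m:ℝ)*(2*π) := by
        rw [hm] at hn; push_cast at hn; linarith
      have hd1 : (d w).1 = -(d s).1 := by
        rw [(htan w).1, (htan s).1, hθw, Real.cos_add_int_mul_two_pi, Real.cos_add_pi]
      have hd2 : (d w).2 = -(d s).2 := by
        rw [(htan w).2, (htan s).2, hθw, Real.sin_add_int_mul_two_pi, Real.sin_add_pi]
      obtain ⟨x₀, hx₀⟩ := hK_body
      obtain ⟨ε, hε, hp, hm'⟩ := hKpts x₀ hx₀
      -- support at w (with reversed normal) plus support at s pins K to a line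
      have hflip : ∀ x ∈ K, (x.1 - (γ s).1) * (-(d s).2) + (x.2 - (γ s).2) * ((d s).1) = 0 := by
        intro x hx
        have h1 := hsup w x hx
        rw [hd1, hd2] at h1
        have h2 := hsup s x hx
        have h3 := hsup w (γ s) (hγK s)
        rw [hd1, hd2] at h3
        have hw' := hw
        simp only [hWdef] at hw'
        nlinarith [h1, h2, hw']
      have hvp := hflip _ hp
      have hvm := hflip _ hm'
      have hv0 := hflip _ (interior_subset hx₀)
      simp only [hNdef, Prod.fst_add, Prod.snd_add, Prod.fst_sub, Prod.snd_sub,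
        Prod.smul_fst, Prod.smul_snd, smul_eq_mul] at hvp hvm
      nlinarith [hvp, hvm, hγ_unit s, hε]
  -- all touch points of the tangent line coincide with γ s
  have hsame : ∀ (u : ℝ) (m : ℤ), θ u = θ s + 2*π*m → γ u = γ s := by
    intro u m hm
    by_contra hne
    have hW_u : W u = 0 := by
      have hd_u : d u = d s := hdir u m hm
      have h1 := hsup u (γ s) (hγK s)
      rw [hd_u] at h1
      have h2 := hW_nonneg u
      simp only [hWdef] at h2 ⊢
      nlinarith [h1, h2]
    choose sel hsel using fun m' : ℤ => hreach (θ s + 2*π*m')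
    have hseg : segment ℝ (γ s) (γ u) ⊆ Set.range (fun m' : ℤ => γ (sel m')) := by
      intro x hxseg
      have hxK : x ∈ K := hK_convex.segment_subset (hγK s) (hγK u) hxseg
      have hxval : (x.1 - (γ s).1) * (-(d s).2) + (x.2 - (γ s).2) * ((d s).1) = 0 := by
        obtain ⟨a', b', ha', hb', hab, hx⟩ := hxseg
        have hWu := hW_u
        simp only [hWdef] at hWu
        have ha'eq : a' = 1 - b' := by linarith
        rw [← hx, ha'eq]
        simp only [Prod.fst_add, Prod.snd_add, Prod.smul_fst, Prod.smul_snd, smul_eq_mul]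
        linear_combination b' * hWu
      have hxfr : x ∈ frontier K := by
        rw [hKclosed.frontier_eq]
        refine ⟨hxK, fun hxint => ?_⟩
        obtain ⟨ε, hε, _, hm2⟩ := hKpts x hxint
        have h5 := hsup s _ hm2
        simp only [hNdef, Prod.fst_sub, Prod.snd_sub, Prod.smul_fst, Prod.smul_snd,
          smul_eq_mul] at h5
        nlinarith [h5, hxval, hγ_unit s, hε]
      obtain ⟨τ, hτ⟩ : ∃ τ, γ τ = x := by
        rw [← hγ_range] at hxfr; exact hxfr
      have hWτ : W τ = 0 := by
        simp only [hWdef, hτ]; exact hxval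
      obtain ⟨m', hm'⟩ := hWzero_char τ hWτ
      refine ⟨m', ?_⟩
      have hττ : τ = sel m' := hθmono.injective (by rw [hm', hsel m'])
      simp only []
      rw [← hττ, hτ]
    have hcount : (segment ℝ (γ s) (γ u)).Countable := (Set.countable_range _).mono hseg
    rw [segment_eq_image'] at hcount
    have hinj : Set.InjOn (fun c : ℝ => γ s + c • (γ u - γ s)) (Set.Icc 0 1) := by
      intro c1 _ c2 _ hcc
      simp only [add_right_inj] at hcc
      have hvne : γ u - γ s ≠ 0 := sub_ne_zero_of_ne hne
      by_contra hc12
      have : (c1 - c2) • (γ u - γ s) = 0 := by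
        rw [sub_smul, hcc, sub_self]
      rcases smul_eq_zero.mp this with h | h
      · exact hc12 (by linarith [sub_eq_zero.mp (by exact_mod_cast h)])
      · exact hvne h
    have hIcc_count : (Set.Icc (0:ℝ) 1).Countable :=
      countable_of_injective_of_countable_image hinj hcount
    have h1 := hIcc_count.le_aleph0
    rw [Cardinal.mk_Icc_real zero_lt_one] at h1
    exact Cardinal.aleph0_lt_continuum.not_ge h1
  intro t
  have hπ : (0:ℝ) < π := Real.pi_pos
  -- FTC for the position
  have hpos1 : ∀ x y : ℝ, (γ y).1 - (γ x).1 = ∫ v in x..y, Real.cos (θ v) := by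
    intro x y
    rw [intervalIntegral.integral_eq_sub_of_hasDerivAt
      (f := fun v => (γ v).1) (f' := fun v => Real.cos (θ v))
      (fun v _ => by have h := hD1 v; rw [(htan v).1] at h; exact h)
      ((Real.continuous_cos.comp hθcont).intervalIntegrable x y)]
  have hpos2 : ∀ x y : ℝ, (γ y).2 - (γ x).2 = ∫ v in x..y, Real.sin (θ v) := by
    intro x y
    rw [intervalIntegral.integral_eq_sub_of_hasDerivAt
      (f := fun v => (γ v).2) (f' := fun v => Real.sin (θ v))
      (fun v _ => by have h := hD2 v; rw [(htan v).2] at h; exact h)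
      ((Real.continuous_sin.comp hθcont).intervalIntegrable x y)]
  -- FTC for the curvature-weighted sine
  have hker : ∀ (φ x y : ℝ), (∫ v in x..y, κ v * Real.sin (θ v - φ))
      = Real.cos (θ x - φ) - Real.cos (θ y - φ) := by
    intro φ x y
    have h := intervalIntegral.integral_eq_sub_of_hasDerivAt
      (f := fun v => -Real.cos (θ v - φ)) (f' := fun v => κ v * Real.sin (θ v - φ))
      (fun v _ => by
        have h1 := (((hθD v).sub_const φ).cos).neg
        exact h1.congr_deriv (by ring))
      ((hκ_cont.mul (Real.continuous_sin.comp (hθcont.sub continuous_const))).intervalIntegrable x y)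
    rw [h]; ring
  -- comparison
  have hcomp : ∀ (φ x y : ℝ), x ≤ y → (∀ v, x ≤ v → v ≤ y → 0 ≤ Real.sin (θ v - φ)) →
      ρmin * (Real.cos (θ x - φ) - Real.cos (θ y - φ)) ≤ ∫ v in x..y, Real.sin (θ v - φ) := by
    intro φ x y hxy hsin
    have h1 : (∫ v in x..y, ρmin * (κ v * Real.sin (θ v - φ)))
        ≤ ∫ v in x..y, Real.sin (θ v - φ) := by
      apply intervalIntegral.integral_mono_on hxy
      · exact ((continuous_const.mul (hκ_cont.mul
          (Real.continuous_sin.comp (hθcont.sub continuous_const)))).intervalIntegrable x y)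
      · exact ((Real.continuous_sin.comp (hθcont.sub continuous_const)).intervalIntegrable x y)
      · intro v hv
        have hs0 := hsin v hv.1 hv.2
        have hκu : κ v * ρmin ≤ 1 := by
          have h2 := hκ_upper v
          have h3 : κ v ≤ 1 / ρmin := by simpa [hκdef] using h2
          exact (le_div_iff₀ hρmin).mp h3
        nlinarith [hs0, hκu, hκ_pos v, hρmin]
    have h2 : (∫ v in x..y, ρmin * (κ v * Real.sin (θ v - φ)))
        = ρmin * (Real.cos (θ x - φ) - Real.cos (θ y - φ)) := by
      rw [intervalIntegral.integral_const_mul, hker]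
    linarith [h1, h2]
  -- combination identity
  have hcomb : ∀ (φ x y : ℝ), (∫ v in x..y, Real.sin (θ v - φ))
      = (∫ v in x..y, Real.sin (θ v)) * Real.cos φ
        - (∫ v in x..y, Real.cos (θ v)) * Real.sin φ := by
    intro φ x y
    have h1 : IntervalIntegrable (fun v => Real.sin (θ v) * Real.cos φ)
        MeasureTheory.volume x y :=
      ((Real.continuous_sin.comp hθcont).mul continuous_const).intervalIntegrable x y
    have h2 : IntervalIntegrable (fun v => Real.cos (θ v) * Real.sin φ)
        MeasureTheory.volume x y :=
      ((Real.continuous_cos.comp hθcont).mul continuous_const).intervalIntegrable x y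
    have e1 : (∫ v in x..y, Real.sin (θ v - φ))
        = ∫ v in x..y, (Real.sin (θ v) * Real.cos φ - Real.cos (θ v) * Real.sin φ) := by
      congr 1
      funext v
      rw [Real.sin_sub]
    rw [e1, intervalIntegral.integral_sub h1 h2, intervalIntegral.integral_mul_const,
      intervalIntegral.integral_mul_const]
  -- bracketing angles
  have h2π : (0:ℝ) < 2*π := by linarith
  set J : ℤ := ⌊(θ t - θ s)/(2*π)⌋ with hJdef
  obtain ⟨a, ha⟩ := hreach (θ s + 2*π*(J:ℝ))
  obtain ⟨b, hb⟩ := hreach (θ s + 2*π*((J:ℝ)+1))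
  have hJle : θ s + 2*π*(J:ℝ) ≤ θ t := by
    have h1 := Int.floor_le ((θ t - θ s)/(2*π))
    rw [← hJdef] at h1
    have h2 := (le_div_iff₀ h2π).mp h1
    linarith
  have hJlt : θ t < θ s + 2*π*((J:ℝ)+1) := by
    have h1 := Int.lt_floor_add_one ((θ t - θ s)/(2*π))
    rw [← hJdef] at h1
    have h2 := (div_lt_iff₀ h2π).mp h1
    linarith
  have hat : a ≤ t := by
    apply hθmono.le_iff_le.mp
    rw [ha]; exact hJle
  have htb : t ≤ b := by
    apply hθmono.le_iff_le.mp
    rw [hb]; linarith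
  have hγa : γ a = γ s := hsame a J ha
  have hγb : γ b = γ s := hsame b (J+1) (by rw [hb]; push_cast; ring)
  have hcos_a : Real.cos (θ a) = (d s).1 := by
    rw [ha, show θ s + 2*π*(J:ℝ) = θ s + (J:ℝ)*(2*π) by ring,
      Real.cos_add_int_mul_two_pi, ← (htan s).1]
  have hsin_a : Real.sin (θ a) = (d s).2 := by
    rw [ha, show θ s + 2*π*(J:ℝ) = θ s + (J:ℝ)*(2*π) by ring,
      Real.sin_add_int_mul_two_pi, ← (htan s).2]
  have hcos_b : Real.cos (θ b) = (d s).1 := by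
    rw [hb, show θ s + 2*π*((J:ℝ)+1) = θ s + ((J+1:ℤ):ℝ)*(2*π) by push_cast; ring,
      Real.cos_add_int_mul_two_pi, ← (htan s).1]
  have hsin_b : Real.sin (θ b) = (d s).2 := by
    rw [hb, show θ s + 2*π*((J:ℝ)+1) = θ s + ((J+1:ℤ):ℝ)*(2*π) by push_cast; ring,
      Real.sin_add_int_mul_two_pi, ← (htan s).2]
  have hba : θ b - θ a = 2*π := by rw [ha, hb]; ring
  rcases le_or_gt (θ t - θ a) π with hαle | hαgt
  · -- forward case: tangent comparison from a
    set φ : ℝ := θ t - π with hφdef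
    have hsin_nn : ∀ v, a ≤ v → v ≤ t → 0 ≤ Real.sin (θ v - φ) := by
      intro v h1 h2
      have h3 : θ a ≤ θ v := hθmono.monotone h1
      have h4 : θ v ≤ θ t := hθmono.monotone h2
      apply Real.sin_nonneg_of_nonneg_of_le_pi
      · rw [hφdef]; linarith
      · rw [hφdef]; linarith
    have hS := hcomp φ a t hat hsin_nn
    have hcost : Real.cos (θ t - φ) = -1 := by
      rw [show θ t - φ = π by rw [hφdef]; ring, Real.cos_pi]
    have hcost' : ρmin * Real.cos (θ t - φ) = -ρmin := by rw [hcost]; ring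
    have hcs' : ρmin * Real.cos (θ a - φ)
        = ρmin * (Real.cos (θ a) * Real.cos φ) + ρmin * (Real.sin (θ a) * Real.sin φ) := by
      rw [Real.cos_sub]; ring
    have hP1 : ((γ t).1 - (γ a).1) * Real.sin φ
        = (∫ v in a..t, Real.cos (θ v)) * Real.sin φ := by rw [hpos1 a t]
    have hP2 : ((γ t).2 - (γ a).2) * Real.cos φ
        = (∫ v in a..t, Real.sin (θ v)) * Real.cos φ := by rw [hpos2 a t]
    have hcombat := hcomb φ a t
    have key : ρmin ≤ ((γ t).1 - ((γ s).1 - ρmin * (d s).2)) * (-Real.sin φ)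
        + ((γ t).2 - ((γ s).2 + ρmin * (d s).1)) * Real.cos φ := by
      rw [← hγa, ← hcos_a, ← hsin_a]
      linarith [hP1, hP2, hcombat, hS, hcs', hcost']
    have hpyth := Real.sin_sq_add_cos_sq φ
    have h7 : ρmin ^ 2 ≤ (((γ t).1 - ((γ s).1 - ρmin * (d s).2)) * (-Real.sin φ)
        + ((γ t).2 - ((γ s).2 + ρmin * (d s).1)) * Real.cos φ) ^ 2 :=
      pow_le_pow_left₀ hρmin.le key 2
    have h8 : (((γ t).1 - ((γ s).1 - ρmin * (d s).2)) * (-Real.sin φ)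
          + ((γ t).2 - ((γ s).2 + ρmin * (d s).1)) * Real.cos φ) ^ 2
        + (((γ t).1 - ((γ s).1 - ρmin * (d s).2)) * Real.cos φ
          + ((γ t).2 - ((γ s).2 + ρmin * (d s).1)) * Real.sin φ) ^ 2
        = ((γ t).1 - ((γ s).1 - ρmin * (d s).2)) ^ 2
          + ((γ t).2 - ((γ s).2 + ρmin * (d s).1)) ^ 2 := by
      linear_combination (((γ t).1 - ((γ s).1 - ρmin * (d s).2)) ^ 2
        + ((γ t).2 - ((γ s).2 + ρmin * (d s).1)) ^ 2) * hpyth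
    linarith [h7, h8, sq_nonneg (((γ t).1 - ((γ s).1 - ρmin * (d s).2)) * Real.cos φ
      + ((γ t).2 - ((γ s).2 + ρmin * (d s).1)) * Real.sin φ)]
  · -- backward case: tangent comparison to b
    set φ : ℝ := θ t with hφdef
    have hsin_nn : ∀ v, t ≤ v → v ≤ b → 0 ≤ Real.sin (θ v - φ) := by
      intro v h1 h2
      have h3 : θ t ≤ θ v := hθmono.monotone h1
      have h4 : θ v ≤ θ b := hθmono.monotone h2
      apply Real.sin_nonneg_of_nonneg_of_le_pi
      · rw [hφdef]; linarith
      · rw [hφdef]; linarith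
    have hS := hcomp φ t b htb hsin_nn
    have hcost : Real.cos (θ t - φ) = 1 := by
      rw [show θ t - φ = 0 by rw [hφdef]; ring, Real.cos_zero]
    have hcost' : ρmin * Real.cos (θ t - φ) = ρmin := by rw [hcost]; ring
    have hcs' : ρmin * Real.cos (θ b - φ)
        = ρmin * (Real.cos (θ b) * Real.cos φ) + ρmin * (Real.sin (θ b) * Real.sin φ) := by
      rw [Real.cos_sub]; ring
    have hP1 : ((γ b).1 - (γ t).1) * Real.sin φ
        = (∫ v in t..b, Real.cos (θ v)) * Real.sin φ := by rw [hpos1 t b]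
    have hP2 : ((γ b).2 - (γ t).2) * Real.cos φ
        = (∫ v in t..b, Real.sin (θ v)) * Real.cos φ := by rw [hpos2 t b]
    have hcombat := hcomb φ t b
    have key : ((γ t).1 - ((γ s).1 - ρmin * (d s).2)) * (-Real.sin φ)
        + ((γ t).2 - ((γ s).2 + ρmin * (d s).1)) * Real.cos φ ≤ -ρmin := by
      rw [← hγb, ← hcos_b, ← hsin_b]
      linarith [hP1, hP2, hcombat, hS, hcs', hcost']
    have hpyth := Real.sin_sq_add_cos_sq φ
    have h7 : ρmin ^ 2 ≤ (-(((γ t).1 - ((γ s).1 - ρmin * (d s).2)) * (-Real.sin φ)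
        + ((γ t).2 - ((γ s).2 + ρmin * (d s).1)) * Real.cos φ)) ^ 2 :=
      pow_le_pow_left₀ hρmin.le (by linarith [key]) 2
    have h8 : (((γ t).1 - ((γ s).1 - ρmin * (d s).2)) * (-Real.sin φ)
          + ((γ t).2 - ((γ s).2 + ρmin * (d s).1)) * Real.cos φ) ^ 2
        + (((γ t).1 - ((γ s).1 - ρmin * (d s).2)) * Real.cos φ
          + ((γ t).2 - ((γ s).2 + ρmin * (d s).1)) * Real.sin φ) ^ 2
        = ((γ t).1 - ((γ s).1 - ρmin * (d s).2)) ^ 2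
          + ((γ t).2 - ((γ s).2 + ρmin * (d s).1)) ^ 2 := by
      linear_combination (((γ t).1 - ((γ s).1 - ρmin * (d s).2)) ^ 2
        + ((γ t).2 - ((γ s).2 + ρmin * (d s).1)) ^ 2) * hpyth
    have h9 : (-(((γ t).1 - ((γ s).1 - ρmin * (d s).2)) * (-Real.sin φ)
        + ((γ t).2 - ((γ s).2 + ρmin * (d s).1)) * Real.cos φ)) ^ 2
        = (((γ t).1 - ((γ s).1 - ρmin * (d s).2)) * (-Real.sin φ)
        + ((γ t).2 - ((γ s).2 + ρmin * (d s).1)) * Real.cos φ) ^ 2 := by ring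
    linarith [h7, h8, h9, sq_nonneg (((γ t).1 - ((γ s).1 - ρmin * (d s).2)) * Real.cos φ
      + ((γ t).2 - ((γ s).2 + ρmin * (d s).1)) * Real.sin φ)]
end
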